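/- Fix reals ε > 0 and C > 0, and let γ : ℕ → ℝ with 0 ≤ γ(k) ≤ C/(ln k)^ε for all k ≥ 2. Then lim_{k→∞} ( 1 − 2^{−⌈2·γ(k)·ln k⌉} )^k = 0. -/
import Mathlib

open Filter Real

lemma stmt15_aux (c d : ℝ) {ε : ℝ} (hε : 0 < ε) :
    Tendsto (fun t : ℝ => t - (c * t ^ (1 - ε) + d)) atTop atTop := by
  have h0 : Tendsto (fun t : ℝ => c * t ^ (-ε)) atTop (nhds 0) := by
    simpa using (tendsto_rpow_neg_atTop hε).const_mul c
  have hev : ∀ᶠ t : ℝ in atTop, c * t ^ (-ε) ≤ 1/2 := by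
    have : ∀ᶠ x : ℝ in nhds 0, x ≤ 1/2 := eventually_le_nhds (by norm_num)
    exact h0.eventually this
  have hlim : Tendsto (fun t : ℝ => t / 2 - d) atTop atTop := by
    apply tendsto_atTop_add_const_right
    exact tendsto_id.atTop_div_const (by norm_num)
  apply tendsto_atTop_mono' atTop ?_ hlim
  filter_upwards [hev, eventually_gt_atTop (0:ℝ)] with t ht ht0
  have h1 : t ^ (1 - ε) = t ^ (-ε) * t := by
    rw [show (1 - ε) = -ε + 1 by ring, Real.rpow_add ht0, Real.rpow_one]
  have h2 : c * t ^ (1 - ε) ≤ t / 2 := by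
    rw [h1, ← mul_assoc]
    calc c * t ^ (-ε) * t ≤ (1/2) * t := by
          exact mul_le_mul_of_nonneg_right ht ht0.le
      _ = t / 2 := by ring
  linarith

/-- Fix reals `ε > 0` and `C > 0`, and let `γ : ℕ → ℝ` satisfy
`0 ≤ γ(k) ≤ C/(ln k)^ε` for all `k ≥ 2`.  Then
`lim_{k→∞} (1 − 2^{−⌈2·γ(k)·ln k⌉})^k = 0`. -/
theorem stmt15 (ε C : ℝ) (hε : 0 < ε) (hC : 0 < C) (γ : ℕ → ℝ)
    (hγ : ∀ k : ℕ, 2 ≤ k → 0 ≤ γ k ∧ γ k ≤ C / (Real.log k) ^ ε) :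
    Filter.Tendsto
      (fun k : ℕ => (1 - (2 : ℝ) ^ (-⌈2 * γ k * Real.log k⌉ : ℤ)) ^ k)
      Filter.atTop (nhds 0) := by
  set E : ℕ → ℝ := fun k => Real.log k - (2 * C * (Real.log k) ^ (1 - ε) + 1) * Real.log 2
    with hE
  have hexp : Tendsto E atTop atTop := by
    have hlog : Tendsto (fun k : ℕ => Real.log k) atTop atTop :=
      Real.tendsto_log_atTop.comp tendsto_natCast_atTop_atTop
    have h := (stmt15_aux (2 * C * Real.log 2) (Real.log 2) hε).comp hlog
    have heq : E = (fun t : ℝ => t - (2 * C * Real.log 2 * t ^ (1 - ε) + Real.log 2)) ∘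
        (fun k : ℕ => Real.log k) := by
      funext k
      simp only [Function.comp, hE]
      ring
    rw [heq]
    exact h
  have hg : Tendsto (fun k : ℕ => Real.exp (-(Real.exp (E k)))) atTop (nhds 0) := by
    have h1 : Tendsto (fun k : ℕ => Real.exp (E k)) atTop atTop :=
      Real.tendsto_exp_atTop.comp hexp
    exact Real.tendsto_exp_atBot.comp (tendsto_neg_atTop_atBot.comp h1)
  apply squeeze_zero' ?_ ?_ hg
  · filter_upwards [eventually_ge_atTop 2] with k hk
    have hlogpos : 0 < Real.log k := by
      apply Real.log_pos
      exact_mod_cast lt_of_lt_of_le one_lt_two (by exact_mod_cast hk)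
    have hm : (0:ℤ) ≤ ⌈2 * γ k * Real.log k⌉ :=
      Int.ceil_nonneg (by nlinarith [(hγ k hk).1])
    have hle1 : (2:ℝ) ^ (-⌈2 * γ k * Real.log k⌉ : ℤ) ≤ 1 :=
      zpow_le_one_of_nonpos₀ one_le_two (by omega)
    exact pow_nonneg (by linarith) k
  · filter_upwards [eventually_ge_atTop 2] with k hk
    obtain ⟨hγ0, hγ1⟩ := hγ k hk
    have hk1 : (1:ℝ) < (k:ℝ) := by exact_mod_cast lt_of_lt_of_le one_lt_two (by exact_mod_cast hk)
    have hlogpos : 0 < Real.log k := Real.log_pos hk1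
    set m : ℤ := ⌈2 * γ k * Real.log k⌉ with hmdef
    have hm0 : (0:ℤ) ≤ m := Int.ceil_nonneg (by nlinarith)
    set x : ℝ := (2:ℝ) ^ (-m : ℤ) with hxdef
    have hxpos : 0 < x := zpow_pos two_pos _
    have hxle1 : x ≤ 1 := zpow_le_one_of_nonpos₀ one_le_two (by omega)
    -- x = exp(-(m * log 2))
    have hxexp : x = Real.exp (-((m:ℝ) * Real.log 2)) := by
      rw [hxdef, ← Real.rpow_intCast, Real.rpow_def_of_pos two_pos]
      congr 1
      push_cast
      ring

    -- ceiling bound: (m : ℝ) ≤ 2C (log k)^{1-ε} + 1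
    have hmb : (m:ℝ) ≤ 2 * C * (Real.log k) ^ (1 - ε) + 1 := by
      have h1 : (m:ℝ) < 2 * γ k * Real.log k + 1 := Int.ceil_lt_add_one _
      have h2 : 2 * γ k * Real.log k ≤ 2 * C * (Real.log k) ^ (1 - ε) := by
        have h3 : γ k * Real.log k ≤ (C / (Real.log k) ^ ε) * Real.log k :=
          mul_le_mul_of_nonneg_right hγ1 hlogpos.le
        have h4 : (C / (Real.log k) ^ ε) * Real.log k = C * (Real.log k) ^ (1 - ε) := by
          rw [Real.rpow_sub hlogpos, Real.rpow_one]
          field_simp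
        nlinarith
      linarith
    -- k * x ≥ exp (E k)
    have hkx : Real.exp (E k) ≤ (k:ℝ) * x := by
      have hk0 : (0:ℝ) < (k:ℝ) := by linarith
      rw [hxexp, ← Real.exp_log hk0, ← Real.exp_add]
      apply Real.exp_le_exp.mpr
      have hlog2 : (0:ℝ) ≤ Real.log 2 := Real.log_nonneg one_le_two
      have hmul : (m:ℝ) * Real.log 2 ≤ (2 * C * (Real.log k) ^ (1 - ε) + 1) * Real.log 2 :=
        mul_le_mul_of_nonneg_right hmb hlog2
      simp only [hE]
      linarith
    -- final chain
    have hstep1 : (1 - x) ^ k ≤ Real.exp (-x) ^ k := by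
      apply pow_le_pow_left₀ (by linarith) _ k
      linarith [Real.add_one_le_exp (-x)]
    have hstep2 : Real.exp (-x) ^ k = Real.exp (-((k:ℝ) * x)) := by
      rw [← Real.exp_nat_mul]; ring_nf
    calc (1 - x) ^ k ≤ Real.exp (-((k:ℝ) * x)) := by rw [← hstep2]; exact hstep1
      _ ≤ Real.exp (-(Real.exp (E k))) := Real.exp_le_exp.mpr (by linarith)
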